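/- Let (λ, μ, ν) be an ℕ-representation of dimension k recognizing the characteristic series of L. Define the representation (η, κ, ζ) of dimension 2k+1 by block matrices: η = (1, λ, 0), κ(a) = [[1, 0, λ], [0, μ(a), σ_a], [0, 0, σ]], ζ = (0, 0, ν)^T, where σ = Σ_{b∈A} μ(b) and σ_a = Σ_{b<a} μ(b). Then for every word u ∈ A*, η·κ(u)·ζ = λ·(Σ_{v≺u} μ(v))·ν. -/

import Mathlib

open Matrix

/-- The radix order on words over a totally ordered alphabet. -/
def radixLt {A : Type*} [LinearOrder A] (u v : List A) : Prop :=
  u.length < v.length ∨ (u.length = v.length ∧ List.Lex (· < ·) u v)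

/-- The block matrix `κ(a) = [[1,0,λ],[0,μ(a),σ_a],[0,0,σ]]` of dimension
`2k+1` (index type `Unit ⊕ Fin k ⊕ Fin k`). -/
def kappaLetter {A : Type*} [Fintype A] [LinearOrder A] {k : ℕ}
    (μ1 : A → Matrix (Fin k) (Fin k) ℕ) (lam : Fin k → ℕ) (a : A) :
    Matrix (Unit ⊕ Fin k ⊕ Fin k) (Unit ⊕ Fin k ⊕ Fin k) ℕ :=
  fun i j => match i, j with
  | Sum.inl _, Sum.inl _ => 1
  | Sum.inl _, Sum.inr (Sum.inl _) => 0
  | Sum.inl _, Sum.inr (Sum.inr q) => lam q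
  | Sum.inr (Sum.inl _), Sum.inl _ => 0
  | Sum.inr (Sum.inl p), Sum.inr (Sum.inl q) => μ1 a p q
  | Sum.inr (Sum.inl p), Sum.inr (Sum.inr q) =>
      (∑ b ∈ Finset.univ.filter (· < a), μ1 b) p q
  | Sum.inr (Sum.inr _), Sum.inl _ => 0
  | Sum.inr (Sum.inr _), Sum.inr (Sum.inl _) => 0
  | Sum.inr (Sum.inr p), Sum.inr (Sum.inr q) => (∑ b : A, μ1 b) p q

/-- The multiplicative extension of `κ` from letters to words. -/
def kappaWord {A : Type*} [Fintype A] [LinearOrder A] {k : ℕ}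
    (μ1 : A → Matrix (Fin k) (Fin k) ℕ) (lam : Fin k → ℕ) (w : List A) :
    Matrix (Unit ⊕ Fin k ⊕ Fin k) (Unit ⊕ Fin k ⊕ Fin k) ℕ :=
  (w.map (kappaLetter μ1 lam)).prod

/-- The row vector `η = (1, λ, 0)`. -/
def etaVec {k : ℕ} (lam : Fin k → ℕ) : Unit ⊕ Fin k ⊕ Fin k → ℕ :=
  Sum.elim (fun _ => 1) (Sum.elim lam (fun _ => 0))

/-- The column vector `ζ = (0, 0, ν)ᵀ`. -/
def zetaVec {k : ℕ} (ν : Fin k → ℕ) : Unit ⊕ Fin k ⊕ Fin k → ℕ :=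
  Sum.elim (fun _ => 0) (Sum.elim (fun _ => 0) ν)



section aux

variable {A : Type*} [LinearOrder A]

lemma lex_concat_iff (b a : A) :
    ∀ (w u : List A), w.length = u.length →
      (List.Lex (· < ·) (w ++ [b]) (u ++ [a]) ↔
        List.Lex (· < ·) w u ∨ (w = u ∧ b < a)) := by
  intro w
  induction w with
  | nil =>
    intro u hu
    have : u = [] := by simpa using hu.symm
    subst this
    simp [List.lex_singleton_iff, List.not_lex_nil]
  | cons c w ih =>
    intro u hu
    match u with
    | [] => simp at hu
    | d :: u =>
      simp only [List.length_cons, Nat.add_right_cancel_iff] at hu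
      rcases lt_trichotomy c d with h | h | h
      · constructor
        · intro _; exact Or.inl (List.Lex.rel h)
        · intro _; exact List.Lex.rel h
      · subst h
        simp only [List.cons_append, List.lex_cons_iff, ih u hu, List.cons_eq_cons,
          true_and]
      · have h1 : ¬ List.Lex (· < ·) (c :: (w ++ [b])) (d :: (u ++ [a])) := by
          intro hl
          cases hl with
          | cons h' => exact absurd rfl (ne_of_gt h)
          | rel h' => exact absurd h' (not_lt_of_gt h)
        have h2 : ¬ List.Lex (· < ·) (c :: w) (d :: u) := by
          intro hl
          cases hl with
          | cons h' => exact absurd rfl (ne_of_gt h)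
          | rel h' => exact absurd h' (not_lt_of_gt h)
        rw [List.cons_append, List.cons_append]
        constructor
        · intro hl; exact absurd hl h1
        · rintro (hl | ⟨he, _⟩)
          · exact absurd hl h2
          · exact absurd (List.cons_eq_cons.mp he).1 (ne_of_gt h)

lemma not_radixLt_nil (v : List A) : ¬ radixLt v [] := by
  rintro (h | ⟨h1, h2⟩)
  · simp at h
  · exact List.not_lex_nil h2

lemma not_radixLt_self (u : List A) : ¬ radixLt u u := by
  rintro (h | ⟨h1, h2⟩)
  · exact lt_irrefl _ h
  · induction u with
    | nil => exact List.not_lex_nil h2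
    | cons c w ih => rw [List.lex_cons_iff] at h2; exact ih rfl h2

lemma radixLt_concat_iff (w u : List A) (b a : A) :
    radixLt (w ++ [b]) (u ++ [a]) ↔ radixLt w u ∨ (w = u ∧ b < a) := by
  unfold radixLt
  simp only [List.length_append, List.length_singleton]
  constructor
  · rintro (h | ⟨h1, h2⟩)
    · exact Or.inl (Or.inl (by omega))
    · have hl : w.length = u.length := by omega
      rcases (lex_concat_iff b a w u hl).mp h2 with h | h
      · exact Or.inl (Or.inr ⟨hl, h⟩)
      · exact Or.inr h
  · rintro ((h | ⟨h1, h2⟩) | ⟨h1, h2⟩)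
    · exact Or.inl (by omega)
    · exact Or.inr ⟨by omega, (lex_concat_iff b a w u h1).mpr (Or.inl h2)⟩
    · subst h1
      exact Or.inr ⟨rfl, (lex_concat_iff b a w w rfl).mpr (Or.inr ⟨rfl, h2⟩)⟩

lemma radixLt_nil_concat (u : List A) (a : A) : radixLt [] (u ++ [a]) := by
  left; simp

end aux

section main

variable {A : Type*} [Fintype A] [LinearOrder A] {k : ℕ}

lemma pred_finset_nil (hfin : ∀ u : List A, {v | radixLt v u}.Finite) :
    (hfin []).toFinset = ∅ := by
  ext v
  simp [Set.Finite.mem_toFinset, not_radixLt_nil]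

lemma pred_finset_concat (hfin : ∀ u : List A, {v | radixLt v u}.Finite)
    (u : List A) (a : A) :
    (hfin (u ++ [a])).toFinset =
      insert []
        ((((hfin u).toFinset ×ˢ (Finset.univ : Finset A)).image
            (fun p => p.1 ++ [p.2])) ∪
          ((Finset.univ.filter (· < a)).image (fun b => u ++ [b]))) := by
  ext v
  simp only [Set.Finite.mem_toFinset, Set.mem_setOf_eq, Finset.mem_insert,
    Finset.mem_union, Finset.mem_image, Finset.mem_product, Finset.mem_filter,
    Finset.mem_univ, true_and, and_true, Prod.exists]
  constructor
  · intro h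
    rcases List.eq_nil_or_concat v with rfl | ⟨w, b, rfl⟩
    · exact Or.inl rfl
    · rw [List.concat_eq_append] at h ⊢
      rcases (radixLt_concat_iff w u b a).mp h with h' | ⟨h1, h2⟩
      · exact Or.inr (Or.inl ⟨w, b, h', rfl⟩)
      · subst h1; exact Or.inr (Or.inr ⟨b, h2, rfl⟩)
  · rintro (rfl | (⟨w, b, hw, rfl⟩ | ⟨b, hb, rfl⟩))
    · exact radixLt_nil_concat u a
    · exact (radixLt_concat_iff w u b a).mpr (Or.inl hw)
    · exact (radixLt_concat_iff u u b a).mpr (Or.inr ⟨rfl, hb⟩)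

lemma sum_pred_concat (μ : List A → Matrix (Fin k) (Fin k) ℕ)
    (hμ1 : μ [] = 1) (hμm : ∀ u v : List A, μ (u ++ v) = μ u * μ v)
    (hfin : ∀ u : List A, {v | radixLt v u}.Finite) (u : List A) (a : A) :
    ∑ v ∈ (hfin (u ++ [a])).toFinset, μ v =
      1 + (∑ v ∈ (hfin u).toFinset, μ v) * (∑ b : A, μ [b]) +
        μ u * (∑ b ∈ Finset.univ.filter (· < a), μ [b]) := by
  have hinj : Function.Injective (fun p : List A × A => p.1 ++ [p.2]) := by
    rintro ⟨w, b⟩ ⟨w', b'⟩ h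
    simp only at h
    rw [← List.concat_eq_append, ← List.concat_eq_append] at h
    obtain ⟨h1, h2⟩ := List.concat_inj.mp h
    simp [h1, h2]
  have hinj2 : Function.Injective (fun b : A => u ++ [b]) := by
    intro b b' h
    simpa using h
  rw [pred_finset_concat hfin u a]
  have hnotmem : ([] : List A) ∉
      ((((hfin u).toFinset ×ˢ (Finset.univ : Finset A)).image
          (fun p => p.1 ++ [p.2])) ∪
        ((Finset.univ.filter (· < a)).image (fun b => u ++ [b]))) := by
    simp
  have hdisj : Disjoint
      (((hfin u).toFinset ×ˢ (Finset.univ : Finset A)).image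
          (fun p => p.1 ++ [p.2]))
      ((Finset.univ.filter (· < a)).image (fun b => u ++ [b])) := by
    rw [Finset.disjoint_left]
    rintro v hv hv'
    simp only [Finset.mem_image, Finset.mem_product, Finset.mem_filter,
      Finset.mem_univ, true_and, and_true, Prod.exists,
      Set.Finite.mem_toFinset] at hv hv'
    obtain ⟨w, b, hw, rfl⟩ := hv
    obtain ⟨b', _, he⟩ := hv'
    rw [← List.concat_eq_append, ← List.concat_eq_append] at he
    obtain ⟨rfl, rfl⟩ := List.concat_inj.mp he
    exact not_radixLt_self u hw
  rw [Finset.sum_insert hnotmem, Finset.sum_union hdisj,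
    Finset.sum_image (fun x _ y _ h => hinj h),
    Finset.sum_image (fun x _ y _ h => hinj2 h), hμ1]
  have h3 : ∑ x ∈ (hfin u).toFinset ×ˢ (Finset.univ : Finset A), μ (x.1 ++ [x.2]) =
      (∑ v ∈ (hfin u).toFinset, μ v) * (∑ b : A, μ [b]) := by
    rw [Finset.sum_product, Finset.sum_mul_sum]
    exact Finset.sum_congr rfl fun w _ => Finset.sum_congr rfl fun b _ => hμm w [b]
  have h4 : ∑ b ∈ Finset.univ.filter (· < a), μ (u ++ [b]) =
      μ u * (∑ b ∈ Finset.univ.filter (· < a), μ [b]) := by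
    rw [Finset.mul_sum]
    exact Finset.sum_congr rfl fun b _ => hμm u [b]
  rw [h3, h4, add_assoc]


lemma vecMul_kappaLetter (μ1 : A → Matrix (Fin k) (Fin k) ℕ) (lam : Fin k → ℕ)
    (a : A) (c : ℕ) (g h : Fin k → ℕ) :
    Sum.elim (fun _ => c) (Sum.elim g h) ᵥ* kappaLetter μ1 lam a =
      Sum.elim (fun _ => c)
        (Sum.elim (g ᵥ* μ1 a)
          (fun q => c * lam q + (g ᵥ* (∑ b ∈ Finset.univ.filter (· < a), μ1 b)) q
            + (h ᵥ* (∑ b : A, μ1 b)) q)) := by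
  funext j
  cases j with
  | inl j =>
    simp [vecMul, dotProduct, Fintype.sum_sum_type, kappaLetter]
  | inr j =>
    cases j with
    | inl q =>
      simp [vecMul, dotProduct, Fintype.sum_sum_type, kappaLetter]
    | inr q =>
      simp [vecMul, dotProduct, Fintype.sum_sum_type, kappaLetter, add_assoc]

lemma kappaWord_concat (μ1 : A → Matrix (Fin k) (Fin k) ℕ) (lam : Fin k → ℕ)
    (u : List A) (a : A) :
    kappaWord μ1 lam (u ++ [a]) = kappaWord μ1 lam u * kappaLetter μ1 lam a := by
  simp [kappaWord]

lemma eta_vecMul_kappaWord (μ : List A → Matrix (Fin k) (Fin k) ℕ)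
    (hμ1 : μ [] = 1) (hμm : ∀ u v : List A, μ (u ++ v) = μ u * μ v)
    (lam : Fin k → ℕ) (hfin : ∀ u : List A, {v | radixLt v u}.Finite)
    (u : List A) :
    etaVec lam ᵥ* kappaWord (fun a => μ [a]) lam u =
      Sum.elim (fun _ => 1)
        (Sum.elim (lam ᵥ* μ u) (lam ᵥ* (∑ v ∈ (hfin u).toFinset, μ v))) := by
  induction u using List.reverseRecOn with
  | nil =>
    rw [pred_finset_nil hfin]
    simp only [Finset.sum_empty, hμ1]
    funext j
    cases j with
    | inl j => simp [kappaWord, etaVec]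
    | inr j =>
      cases j with
      | inl q => simp [kappaWord, etaVec]
      | inr q => simp [kappaWord, etaVec]
  | append_singleton u a ih =>
    rw [kappaWord_concat, ← Matrix.vecMul_vecMul, ih, vecMul_kappaLetter,
      sum_pred_concat μ hμ1 hμm hfin u a]
    funext j
    cases j with
    | inl j => rfl
    | inr j =>
      cases j with
      | inl q =>
        simp only [Sum.elim_inr, Sum.elim_inl, Matrix.vecMul_vecMul, hμm u [a]]
      | inr q =>
        simp only [Sum.elim_inr, Matrix.vecMul_add, Matrix.vecMul_one,
          Matrix.vecMul_vecMul, Pi.add_apply, one_mul]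
        ring

end main

/-- The block representation `(η, κ, ζ)` of dimension `2k+1` computes the
quantity `λ·μ(P(u))·ν` for every word `u`. -/
theorem block_rep_computes_initial_segment {A : Type*} [Fintype A] [LinearOrder A]
    (k : ℕ) (μ : List A → Matrix (Fin k) (Fin k) ℕ)
    (hμ1 : μ [] = 1) (hμm : ∀ u v : List A, μ (u ++ v) = μ u * μ v)
    (lam ν : Fin k → ℕ) (L : Set (List A)) [DecidablePred (· ∈ L)]
    (hchar : ∀ w : List A, lam ⬝ᵥ (μ w *ᵥ ν) = if w ∈ L then 1 else 0)
    (hfin : ∀ u : List A, {v | radixLt v u}.Finite)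
    (u : List A) :
    etaVec lam ⬝ᵥ (kappaWord (fun a => μ [a]) lam u *ᵥ zetaVec ν) =
      lam ⬝ᵥ ((∑ v ∈ (hfin u).toFinset, μ v) *ᵥ ν) := by
  rw [Matrix.dotProduct_mulVec, eta_vecMul_kappaWord μ hμ1 hμm lam hfin u,
    Matrix.dotProduct_mulVec]
  simp [dotProduct, Fintype.sum_sum_type, zetaVec]
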